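/- Let G be a split graph on d−1 vertices. Then the Hansen polytope H(G) ⊆ ℝ^d has at least 3^d nonempty faces; that is, Kalai's 3^d-conjecture holds for Hansen polytopes of split graphs. -/

import Mathlib

/-- A finset of vertices is stable (independent) in `G` if no two of its elements are adjacent. -/
def IsStable {n : ℕ} (G : SimpleGraph (Fin n)) (I : Finset (Fin n)) : Prop :=
  ∀ ⦃a⦄, a ∈ I → ∀ ⦃b⦄, b ∈ I → ¬ G.Adj a b

/-- The point `e_0 + ∑_{i ∈ I} e_i ∈ ℝ^{n+1}`. -/
def hansenVert {n : ℕ} (I : Finset (Fin n)) : Fin (n + 1) → ℝ :=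
  fun j => Fin.cases 1 (fun i => if i ∈ I then 1 else 0) j

/-- The Hansen polytope of `G`. -/
def hansenPolytope {n : ℕ} (G : SimpleGraph (Fin n)) : Set (Fin (n + 1) → ℝ) :=
  convexHull ℝ
    {x | ∃ I : Finset (Fin n), IsStable G I ∧ (x = hansenVert I ∨ x = -hansenVert I)}

/-- The number of nonempty (exposed) faces of a polytope `P ⊆ ℝ^d`, including `P` itself. -/
noncomputable def numFaces {d : ℕ} (P : Set (Fin d → ℝ)) : ℕ :=
  {F : Set (Fin d → ℝ) | IsExposed ℝ P F ∧ F.Nonempty}.ncard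

namespace HansenProof

open Finset
open scoped Classical

/-- Three-valued signs. -/
inductive Sgn | pos | zer | neg
  deriving DecidableEq

instance : Fintype Sgn :=
  ⟨⟨{Sgn.pos, Sgn.zer, Sgn.neg}, by decide⟩, fun x => by cases x <;> decide⟩

lemma Sgn.card_eq : Fintype.card Sgn = 3 := by decide

/-- Flip of a sign. -/
def Sgn.flip : Sgn → Sgn
  | .pos => .neg
  | .neg => .pos
  | .zer => .zer

@[simp] lemma Sgn.flip_flip (a : Sgn) : a.flip.flip = a := by cases a <;> rfl
@[simp] lemma Sgn.flip_eq_pos {a : Sgn} : a.flip = .pos ↔ a = .neg := by cases a <;> simp [Sgn.flip]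
@[simp] lemma Sgn.flip_eq_neg {a : Sgn} : a.flip = .neg ↔ a = .pos := by cases a <;> simp [Sgn.flip]
@[simp] lemma Sgn.flip_eq_zer {a : Sgn} : a.flip = .zer ↔ a = .zer := by cases a <;> simp [Sgn.flip]

variable {n : ℕ} (G : SimpleGraph (Fin n)) (C S : Finset (Fin n))

/-- Neighbours of a vertex, as a finset (classically). -/
noncomputable def Np (v : Fin n) : Finset (Fin n) := Finset.univ.filter (fun w => G.Adj v w)

@[simp] lemma mem_Np {v w : Fin n} : w ∈ Np G v ↔ G.Adj v w := by simp [Np]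

/-- A sign pattern on the `n+1` coordinates. -/
abbrev Pat (n : ℕ) := Fin (n + 1) → Sgn

/-- Flip a pattern. -/
def flipT (τ : Pat n) : Pat n := fun j => (τ j).flip

@[simp] lemma flipT_flipT (τ : Pat n) : flipT (flipT τ) = τ := by
  funext j; simp [flipT]

noncomputable def Sp (τ : Pat n) : Finset (Fin n) := S.filter (fun v => τ v.succ = .pos)
noncomputable def Sm (τ : Pat n) : Finset (Fin n) := S.filter (fun v => τ v.succ = .neg)
noncomputable def Cp (τ : Pat n) : Finset (Fin n) := C.filter (fun v => τ v.succ = .pos)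
noncomputable def Cm (τ : Pat n) : Finset (Fin n) := C.filter (fun v => τ v.succ = .neg)

@[simp] lemma Sp_flip (τ : Pat n) : Sp S (flipT τ) = Sm S τ := by
  simp [Sp, Sm, flipT]
@[simp] lemma Sm_flip (τ : Pat n) : Sm S (flipT τ) = Sp S τ := by
  simp [Sp, Sm, flipT]
@[simp] lemma Cp_flip (τ : Pat n) : Cp C (flipT τ) = Cm C τ := by
  simp [Cp, Cm, flipT]
@[simp] lemma Cm_flip (τ : Pat n) : Cm C (flipT τ) = Cp C τ := by
  simp [Cp, Cm, flipT]

lemma mem_Sp {τ : Pat n} {v : Fin n} : v ∈ Sp S τ ↔ v ∈ S ∧ τ v.succ = .pos := by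
  simp [Sp]
lemma mem_Sm {τ : Pat n} {v : Fin n} : v ∈ Sm S τ ↔ v ∈ S ∧ τ v.succ = .neg := by
  simp [Sm]
lemma mem_Cp {τ : Pat n} {v : Fin n} : v ∈ Cp C τ ↔ v ∈ C ∧ τ v.succ = .pos := by
  simp [Cp]
lemma mem_Cm {τ : Pat n} {v : Fin n} : v ∈ Cm C τ ↔ v ∈ C ∧ τ v.succ = .neg := by
  simp [Cm]

/-- The `t0a` condition: every signed clique vertex has a neighbour among signed stable
vertices. -/
def T0A (τ : Pat n) : Prop :=
  ∀ c ∈ Cp C τ ∪ Cm C τ, (Np G c ∩ Sp S τ).Nonempty ∨ (Np G c ∩ Sm S τ).Nonempty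

lemma T0A_flip {τ : Pat n} : T0A G C S (flipT τ) ↔ T0A G C S τ := by
  unfold T0A
  simp only [Sp_flip, Sm_flip, Cp_flip, Cm_flip]
  constructor
  · intro h c hc
    exact (h c (by rwa [Finset.union_comm])).symm
  · intro h c hc
    exact (h c (by rwa [Finset.union_comm])).symm

/-- The "hit" cliques coming from positively signed stable vertices. -/
noncomputable def KsP (τ : Pat n) : Finset (Finset (Fin n)) :=
  (Sp S τ).image (fun s => insert s (Np G s ∩ Cp C τ))

/-- The extra cliques, depending on the sign of coordinate `0`. -/
noncomputable def branch (τ : Pat n) : Finset (Finset (Fin n)) :=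
  if τ 0 = Sgn.pos then ∅
  else if τ 0 = Sgn.neg then
    insert (if (Cp C τ).Nonempty then Cp C τ else ∅)
      ((C \ Cm C τ).image (fun y => insert y (Cp C τ)))
  else if T0A G C S τ then
    ((C \ (Cp C τ ∪ Cm C τ)).filter
        (fun c => (Np G c ∩ Sp S τ).Nonempty ∧ (Np G c ∩ Sm S τ) = ∅)).biUnion
      (fun c => (Np G c ∩ Sp S τ).image
        (fun s => insert c (insert s (Np G c ∩ Np G s ∩ Cp C τ))))
  else {if (Cp C τ).Nonempty then Cp C τ else ∅}

/-- The "must-hit" family of cliques for the face of `τ`. -/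
noncomputable def KF (τ : Pat n) : Finset (Finset (Fin n)) := KsP G C S τ ∪ branch G C S τ

/-- The "must-miss" family: the must-hit family of the flipped pattern. -/
noncomputable def KF' (τ : Pat n) : Finset (Finset (Fin n)) := KF G C S (flipT τ)

lemma KF'_flip (τ : Pat n) : KF' G C S (flipT τ) = KF G C S τ := by
  unfold KF'; rw [flipT_flipT]

/-- Membership of a stable set in the positive side of the face of `τ`. -/
def memA (τ : Pat n) (I : Finset (Fin n)) : Prop :=
  (∀ K ∈ KF G C S τ, (I ∩ K).Nonempty) ∧ (∀ K ∈ KF' G C S τ, I ∩ K = ∅)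

lemma memB_eq_memA_flip (τ : Pat n) (I : Finset (Fin n)) :
    ((∀ K ∈ KF G C S τ, I ∩ K = ∅) ∧ (∀ K ∈ KF' G C S τ, (I ∩ K).Nonempty))
      ↔ memA G C S (flipT τ) I := by
  unfold memA
  rw [KF'_flip]
  exact and_comm

/-! ### Vertices -/

@[simp] lemma hv_zero (I : Finset (Fin n)) : hansenVert I 0 = 1 := rfl
@[simp] lemma hv_succ (I : Finset (Fin n)) (i : Fin n) :
    hansenVert I i.succ = if i ∈ I then 1 else 0 := rfl

lemma hv_inj {I J : Finset (Fin n)} (h : hansenVert I = hansenVert J) : I = J := by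
  ext i
  have := congrFun h i.succ
  simp only [hv_succ] at this
  by_cases hI : i ∈ I <;> by_cases hJ : i ∈ J <;> simp [hI, hJ] at this ⊢

lemma hv_ne_neg (I J : Finset (Fin n)) : hansenVert I ≠ -hansenVert J := by
  intro h
  have := congrFun h 0
  simp only [Pi.neg_apply, hv_zero] at this
  norm_num at this

/-- The vertex set of the Hansen polytope. -/
def VS : Set (Fin (n + 1) → ℝ) :=
  {x | ∃ I : Finset (Fin n), IsStable G I ∧ (x = hansenVert I ∨ x = -hansenVert I)}

lemma hansen_eq_hull : hansenPolytope G = convexHull ℝ (VS G) := rfl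

lemma VS_finite : (VS G).Finite := by
  have : VS G ⊆ Set.range (fun I : Finset (Fin n) => hansenVert I) ∪
      Set.range (fun I : Finset (Fin n) => -hansenVert I) := by
    rintro x ⟨I, -, h | h⟩
    · exact Or.inl ⟨I, h.symm⟩
    · exact Or.inr ⟨I, h.symm⟩
  exact ((Set.finite_range _).union (Set.finite_range _)).subset this

lemma stable_empty : IsStable G (∅ : Finset (Fin n)) := by
  intro a ha; simp at ha

lemma VS_nonempty : (VS G).Nonempty :=
  ⟨hansenVert ∅, ∅, stable_empty G, Or.inl rfl⟩

/-! ### Cliques and stable sets -/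

lemma stable_subset {I J : Finset (Fin n)} (h : IsStable G J) (hIJ : I ⊆ J) :
    IsStable G I := fun _ ha _ hb => h (hIJ ha) (hIJ hb)

lemma stable_clique_inter {I K : Finset (Fin n)} (hI : IsStable G I)
    (hK : G.IsClique (↑K : Set (Fin n))) : (I ∩ K).card ≤ 1 := by
  by_contra h
  push_neg at h
  obtain ⟨a, ha, b, hb, hab⟩ := Finset.one_lt_card.1 h
  simp only [Finset.mem_inter] at ha hb
  exact hI ha.1 hb.1 (hK ha.2 hb.2 hab)

/-! ### The linear functional of a pattern -/

/-- The basic `±1`-valued functional of a clique. -/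
noncomputable def uK (K : Finset (Fin n)) : (Fin (n + 1) → ℝ) →L[ℝ] ℝ :=
  (2 : ℝ) • (∑ i ∈ K, ContinuousLinearMap.proj i.succ) - ContinuousLinearMap.proj 0

lemma uK_apply (K : Finset (Fin n)) (x : Fin (n + 1) → ℝ) :
    uK K x = 2 * (∑ i ∈ K, x i.succ) - x 0 := by
  simp [uK, ContinuousLinearMap.sum_apply]

lemma uK_vert (K I : Finset (Fin n)) :
    uK K (hansenVert I) = 2 * ((I ∩ K).card : ℝ) - 1 := by
  rw [uK_apply]
  have : (∑ i ∈ K, hansenVert I i.succ) = ((I ∩ K).card : ℝ) := by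
    simp only [hv_succ]
    rw [Finset.sum_boole]
    congr 1
    rw [Finset.filter_mem_eq_inter, Finset.inter_comm]
  rw [this, hv_zero]

lemma uK_vert_pm {K I : Finset (Fin n)} (hI : IsStable G I)
    (hK : G.IsClique (↑K : Set (Fin n))) :
    uK K (hansenVert I) = if (I ∩ K).Nonempty then (1 : ℝ) else -1 := by
  rw [uK_vert]
  rcases Nat.le_one_iff_eq_zero_or_eq_one.1 (stable_clique_inter G hI hK) with h | h
  · rw [h]
    have : ¬(I ∩ K).Nonempty := by
      rw [Finset.nonempty_iff_ne_empty]
      simp [Finset.card_eq_zero.1 h]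
    simp [this]
  · rw [h]
    have : (I ∩ K).Nonempty := Finset.card_pos.1 (by omega)
    simp [this]
    norm_num

/-- The exposing functional of a pattern. -/
noncomputable def lin (τ : Pat n) : (Fin (n + 1) → ℝ) →L[ℝ] ℝ :=
  ∑ K ∈ KF G C S τ, uK K - ∑ K ∈ KF' G C S τ, uK K

/-- The maximum value. -/
noncomputable def Mv (τ : Pat n) : ℝ := (KF G C S τ).card + (KF' G C S τ).card

lemma lin_flip (τ : Pat n) : lin G C S (flipT τ) = -lin G C S τ := by
  unfold lin
  rw [KF'_flip]
  unfold KF'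
  abel

lemma Mv_flip (τ : Pat n) : Mv G C S (flipT τ) = Mv G C S τ := by
  unfold Mv
  rw [KF'_flip]
  unfold KF'
  ring

/-! ### All members of the families are cliques -/

lemma clique_of_subset_C (hC : G.IsClique (↑C : Set (Fin n))) {K : Finset (Fin n)}
    (h : K ⊆ C) : G.IsClique (↑K : Set (Fin n)) :=
  hC.subset (Finset.coe_subset.2 h)

lemma KF_clique (hC : G.IsClique (↑C : Set (Fin n))) (τ : Pat n) :
    ∀ K ∈ KF G C S τ, G.IsClique (↑K : Set (Fin n)) := by
  intro K hK
  rw [KF, Finset.mem_union] at hK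
  rcases hK with hK | hK
  · -- K_s shape
    rw [KsP, Finset.mem_image] at hK
    obtain ⟨s, _, rfl⟩ := hK
    intro a ha b hb hab
    simp only [Finset.coe_insert, Set.mem_insert_iff, Finset.mem_coe, Finset.mem_inter,
      mem_Np, mem_Cp] at ha hb
    rcases ha with rfl | ⟨has, hac⟩
    · rcases hb with rfl | ⟨hbs, _⟩
      · exact absurd rfl hab
      · exact hbs
    · rcases hb with rfl | ⟨hbs, hbc⟩
      · exact has.symm
      · exact hC hac.1 hbc.1 hab
  · rw [branch] at hK
    by_cases h0 : τ 0 = Sgn.pos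
    · rw [if_pos h0] at hK
      simp at hK
    rw [if_neg h0] at hK
    by_cases h1 : τ 0 = Sgn.neg
    · rw [if_pos h1] at hK
      simp only [Finset.mem_insert, Finset.mem_image] at hK
      rcases hK with rfl | ⟨y, hy, rfl⟩
      · split
        · exact clique_of_subset_C G C hC (Finset.filter_subset _ _)
        · simp
      · refine clique_of_subset_C G C hC (Finset.insert_subset ?_ (Finset.filter_subset _ _))
        exact (Finset.mem_sdiff.1 hy).1
    · rw [if_neg h1] at hK
      by_cases h2 : T0A G C S τ
      · rw [if_pos h2] at hK
        simp only [Finset.mem_biUnion] at hK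
        obtain ⟨c, hc, hK⟩ := hK
        rw [Finset.mem_image] at hK
        obtain ⟨s, hs, rfl⟩ := hK
        rw [Finset.mem_inter, mem_Np] at hs
        intro a ha b hb hab
        simp only [Finset.coe_insert, Set.mem_insert_iff, Finset.mem_coe, Finset.mem_inter,
          mem_Np, mem_Cp] at ha hb
        have hcC : c ∈ C := by
          rw [Finset.mem_filter, Finset.mem_sdiff] at hc
          exact hc.1.1
        rcases ha with rfl | ha
        · rcases hb with rfl | hb
          · exact absurd rfl hab
          · rcases hb with rfl | ⟨⟨hb1, _⟩, _⟩
            · exact hs.1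
            · exact hb1
        · rcases ha with rfl | ⟨⟨ha1, ha2⟩, ha3⟩
          · rcases hb with rfl | hb
            · exact hs.1.symm
            · rcases hb with rfl | ⟨⟨_, hb2⟩, _⟩
              · exact absurd rfl hab
              · exact hb2
          · rcases hb with rfl | hb
            · exact ha1.symm
            · rcases hb with rfl | ⟨⟨_, _⟩, hb3⟩
              · exact ha2.symm
              · exact hC ha3.1 hb3.1 hab
      · rw [if_neg h2] at hK
        simp only [Finset.mem_singleton] at hK
        subst hK
        split
        · exact clique_of_subset_C G C hC (Finset.filter_subset _ _)
        · simp

/-! ### Sum helpers for `±1`-valued functions -/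

lemma sum_pm {ι : Type*} (T : Finset ι) (f : ι → ℝ) (h : ∀ i ∈ T, f i = 1 ∨ f i = -1) :
    (∑ i ∈ T, f i ≤ T.card) ∧ (∑ i ∈ T, f i = T.card ↔ ∀ i ∈ T, f i = 1) := by
  have h1 : ∀ i ∈ T, f i ≤ 1 := by
    intro i hi; rcases h i hi with h' | h' <;> rw [h'] <;> norm_num
  have hle : ∑ i ∈ T, f i ≤ T.card := by
    calc ∑ i ∈ T, f i ≤ ∑ _i ∈ T, (1 : ℝ) := Finset.sum_le_sum h1
    _ = T.card := by simp
  refine ⟨hle, ?_, ?_⟩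
  · intro he
    have h0 : ∑ i ∈ T, (1 - f i) = 0 := by
      rw [Finset.sum_sub_distrib]
      simp [he]
    have := (Finset.sum_eq_zero_iff_of_nonneg (fun i hi => by linarith [h1 i hi])).1 h0
    intro i hi
    have := this i hi
    linarith
  · intro hall
    rw [Finset.sum_congr rfl hall]
    simp

lemma sum_pm_neg {ι : Type*} (T : Finset ι) (f : ι → ℝ) (h : ∀ i ∈ T, f i = 1 ∨ f i = -1) :
    (-(T.card : ℝ) ≤ ∑ i ∈ T, f i) ∧ (∑ i ∈ T, f i = -(T.card : ℝ) ↔ ∀ i ∈ T, f i = -1) := by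
  have hneg : ∀ i ∈ T, -f i = 1 ∨ -f i = -1 := by
    intro i hi; rcases h i hi with h' | h'
    · right; rw [h']
    · left; rw [h']; norm_num
  obtain ⟨hle, hiff⟩ := sum_pm T (fun i => -f i) hneg
  rw [Finset.sum_neg_distrib] at hle hiff
  refine ⟨by linarith, ?_, ?_⟩
  · intro he i hi
    have h1 : -∑ i ∈ T, f i = (T.card : ℝ) := by linarith
    have := hiff.1 h1 i hi
    try simp only at this
    linarith
  · intro hall
    have : ∀ i ∈ T, -f i = 1 := by
      intro i hi
      rw [hall i hi]; norm_num
    have h2 := hiff.2 this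
    linarith

/-! ### Values of the functional on vertices -/

lemma lin_vert_le (hC : G.IsClique (↑C : Set (Fin n))) (τ : Pat n) {I : Finset (Fin n)}
    (hI : IsStable G I) : lin G C S τ (hansenVert I) ≤ Mv G C S τ := by
  have hcl := KF_clique G C S hC τ
  have hcl' := KF_clique G C S hC (flipT τ)
  have hpm1 : ∀ K ∈ KF G C S τ, uK K (hansenVert I) = 1 ∨ uK K (hansenVert I) = -1 := by
    intro K hK
    rw [uK_vert_pm G hI (hcl K hK)]
    split <;> simp
  have hpm2 : ∀ K ∈ KF' G C S τ, uK K (hansenVert I) = 1 ∨ uK K (hansenVert I) = -1 := by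
    intro K hK
    rw [uK_vert_pm G hI (hcl' K hK)]
    split <;> simp
  rw [lin, ContinuousLinearMap.sub_apply, ContinuousLinearMap.sum_apply,
    ContinuousLinearMap.sum_apply, Mv]
  have b1 := (sum_pm (KF G C S τ) (fun K => uK K (hansenVert I)) hpm1).1
  have b2 := (sum_pm_neg (KF' G C S τ) (fun K => uK K (hansenVert I)) hpm2).1
  try simp only at b1 b2
  linarith

lemma lin_vert_eq_iff (hC : G.IsClique (↑C : Set (Fin n))) (τ : Pat n) {I : Finset (Fin n)}
    (hI : IsStable G I) :
    lin G C S τ (hansenVert I) = Mv G C S τ ↔ memA G C S τ I := by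
  have hcl := KF_clique G C S hC τ
  have hcl' := KF_clique G C S hC (flipT τ)
  have hpm1 : ∀ K ∈ KF G C S τ, uK K (hansenVert I) = 1 ∨ uK K (hansenVert I) = -1 := by
    intro K hK
    rw [uK_vert_pm G hI (hcl K hK)]
    split <;> simp
  have hpm2 : ∀ K ∈ KF' G C S τ, uK K (hansenVert I) = 1 ∨ uK K (hansenVert I) = -1 := by
    intro K hK
    rw [uK_vert_pm G hI (hcl' K hK)]
    split <;> simp
  have e1 := sum_pm (KF G C S τ) (fun K => uK K (hansenVert I)) hpm1
  have e2 := sum_pm_neg (KF' G C S τ) (fun K => uK K (hansenVert I)) hpm2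
  try simp only at e1 e2
  rw [lin, ContinuousLinearMap.sub_apply, ContinuousLinearMap.sum_apply,
    ContinuousLinearMap.sum_apply, Mv]
  constructor
  · intro he
    have hS1 : ∑ K ∈ KF G C S τ, uK K (hansenVert I) = (KF G C S τ).card := by
      linarith [e1.1, e2.1]
    have hS2 : ∑ K ∈ KF' G C S τ, uK K (hansenVert I) = -((KF' G C S τ).card : ℝ) := by
      linarith [e1.1, e2.1]
    constructor
    · intro K hK
      have := e1.2.1 hS1 K hK
      rw [uK_vert_pm G hI (hcl K hK)] at this
      by_contra hne
      rw [if_neg hne] at this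
      norm_num at this
    · intro K hK
      have := e2.2.1 hS2 K hK
      rw [uK_vert_pm G hI (hcl' K hK)] at this
      by_contra hne
      have hne' : (I ∩ K).Nonempty := Finset.nonempty_iff_ne_empty.2 hne
      rw [if_pos hne'] at this
      norm_num at this
  · rintro ⟨hA, hA'⟩
    have hS1 : ∑ K ∈ KF G C S τ, uK K (hansenVert I) = (KF G C S τ).card := by
      apply e1.2.2
      intro K hK
      rw [uK_vert_pm G hI (hcl K hK), if_pos (hA K hK)]
    have hS2 : ∑ K ∈ KF' G C S τ, uK K (hansenVert I) = -((KF' G C S τ).card : ℝ) := by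
      apply e2.2.2
      intro K hK
      rw [uK_vert_pm G hI (hcl' K hK), if_neg (by rw [hA' K hK]; simp)]
    rw [hS1, hS2]
    ring

/-! ### Faces of the Hansen polytope -/

/-- The face of the Hansen polytope exposed by the functional of `τ`. -/
noncomputable def Φ (τ : Pat n) : Set (Fin (n + 1) → ℝ) :=
  {x ∈ hansenPolytope G | ∀ y ∈ hansenPolytope G, lin G C S τ y ≤ lin G C S τ x}

lemma Φ_isExposed (τ : Pat n) : IsExposed ℝ (hansenPolytope G) (Φ G C S τ) :=
  fun _ => ⟨lin G C S τ, rfl⟩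

lemma lin_neg_vert (τ : Pat n) (I : Finset (Fin n)) :
    lin G C S τ (-hansenVert I) = lin G C S (flipT τ) (hansenVert I) := by
  rw [lin_flip, map_neg]
  simp

lemma lin_le_on_VS (hC : G.IsClique (↑C : Set (Fin n))) (τ : Pat n) :
    ∀ w ∈ VS G, lin G C S τ w ≤ Mv G C S τ := by
  rintro w ⟨I, hI, rfl | rfl⟩
  · exact lin_vert_le G C S hC τ hI
  · rw [lin_neg_vert, ← Mv_flip G C S τ]
    exact lin_vert_le G C S hC (flipT τ) hI

lemma lin_le_on_P (hC : G.IsClique (↑C : Set (Fin n))) (τ : Pat n) :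
    ∀ x ∈ hansenPolytope G, lin G C S τ x ≤ Mv G C S τ := by
  intro x hx
  rw [hansen_eq_hull] at hx
  have hsub : convexHull ℝ (VS G) ⊆ {w | lin G C S τ w ≤ Mv G C S τ} :=
    convexHull_min (lin_le_on_VS G C S hC τ)
      (convex_halfSpace_le ⟨(lin G C S τ).map_add, (lin G C S τ).map_smul⟩ _)
  exact hsub hx

/-- Attainment of the combinatorial maximum: if some signed vertex satisfies the
constraints, then membership of a vertex in `Φ τ` is equivalent to attaining `Mv`. -/
lemma mem_Φ_iff_of_attained (hC : G.IsClique (↑C : Set (Fin n))) (τ : Pat n)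
    (hatt : ∃ I : Finset (Fin n), IsStable G I ∧ (memA G C S τ I ∨ memA G C S (flipT τ) I))
    {w : Fin (n + 1) → ℝ} (hw : w ∈ VS G) :
    w ∈ Φ G C S τ ↔ lin G C S τ w = Mv G C S τ := by
  obtain ⟨I₀, hI₀, hm⟩ := hatt
  -- a vertex attaining the maximum
  have hv₀ : ∃ v₀ ∈ VS G, lin G C S τ v₀ = Mv G C S τ := by
    rcases hm with hm | hm
    · exact ⟨hansenVert I₀, ⟨I₀, hI₀, Or.inl rfl⟩,
        (lin_vert_eq_iff G C S hC τ hI₀).2 hm⟩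
    · refine ⟨-hansenVert I₀, ⟨I₀, hI₀, Or.inr rfl⟩, ?_⟩
      rw [lin_neg_vert, ← Mv_flip G C S τ]
      exact (lin_vert_eq_iff G C S hC (flipT τ) hI₀).2 hm
  obtain ⟨v₀, hv₀V, hv₀M⟩ := hv₀
  have hv₀P : v₀ ∈ hansenPolytope G := by
    rw [hansen_eq_hull]; exact subset_convexHull ℝ _ hv₀V
  have hwP : w ∈ hansenPolytope G := by
    rw [hansen_eq_hull]; exact subset_convexHull ℝ _ hw
  constructor
  · rintro ⟨-, hmax⟩
    have h1 := hmax v₀ hv₀P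
    have h2 := lin_le_on_P G C S hC τ w hwP
    linarith [hv₀M ▸ h1]
  · intro hM
    refine ⟨hwP, fun y hy => ?_⟩
    rw [hM]
    exact lin_le_on_P G C S hC τ y hy

lemma vPos_mem_Φ_iff (hC : G.IsClique (↑C : Set (Fin n))) (τ : Pat n)
    (hatt : ∃ I : Finset (Fin n), IsStable G I ∧ (memA G C S τ I ∨ memA G C S (flipT τ) I))
    {I : Finset (Fin n)} (hI : IsStable G I) :
    hansenVert I ∈ Φ G C S τ ↔ memA G C S τ I := by
  rw [mem_Φ_iff_of_attained G C S hC τ hatt ⟨I, hI, Or.inl rfl⟩]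
  exact lin_vert_eq_iff G C S hC τ hI

lemma vNeg_mem_Φ_iff (hC : G.IsClique (↑C : Set (Fin n))) (τ : Pat n)
    (hatt : ∃ I : Finset (Fin n), IsStable G I ∧ (memA G C S τ I ∨ memA G C S (flipT τ) I))
    {I : Finset (Fin n)} (hI : IsStable G I) :
    -hansenVert I ∈ Φ G C S τ ↔ memA G C S (flipT τ) I := by
  rw [mem_Φ_iff_of_attained G C S hC τ hatt ⟨I, hI, Or.inr rfl⟩]
  rw [lin_neg_vert, ← Mv_flip G C S τ]
  exact lin_vert_eq_iff G C S hC (flipT τ) hI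

lemma Φ_nonempty (hC : G.IsClique (↑C : Set (Fin n))) (τ : Pat n)
    (hatt : ∃ I : Finset (Fin n), IsStable G I ∧ (memA G C S τ I ∨ memA G C S (flipT τ) I)) :
    (Φ G C S τ).Nonempty := by
  obtain ⟨I₀, hI₀, hm⟩ := hatt
  rcases hm with hm | hm
  · exact ⟨hansenVert I₀, (vPos_mem_Φ_iff G C S hC τ ⟨I₀, hI₀, Or.inl hm⟩ hI₀).2 hm⟩
  · exact ⟨-hansenVert I₀, (vNeg_mem_Φ_iff G C S hC τ ⟨I₀, hI₀, Or.inr hm⟩ hI₀).2 hm⟩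

/-! ### Finiteness of the set of nonempty exposed faces -/

lemma exposed_face_eq_hull {F : Set (Fin (n + 1) → ℝ)}
    (hF : IsExposed ℝ (hansenPolytope G) F) (hne : F.Nonempty) :
    F = convexHull ℝ (VS G ∩ F) := by
  obtain ⟨l, rfl⟩ := hF hne
  obtain ⟨v₀, hv₀, hmax⟩ := Set.exists_max_image (VS G) l (VS_finite G) (VS_nonempty G)
  set M := l v₀ with hM
  have hv₀P : v₀ ∈ hansenPolytope G := by
    rw [hansen_eq_hull]; exact subset_convexHull ℝ _ hv₀
  have hPle : ∀ x ∈ hansenPolytope G, l x ≤ M := by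
    intro x hx
    rw [hansen_eq_hull] at hx
    exact convexHull_min hmax (convex_halfSpace_le ⟨l.map_add, l.map_smul⟩ M) hx
  have hFeq : {x ∈ hansenPolytope G | ∀ y ∈ hansenPolytope G, l y ≤ l x} =
      {x ∈ hansenPolytope G | l x = M} := by
    ext x
    constructor
    · rintro ⟨hxP, hxm⟩
      exact ⟨hxP, le_antisymm (hPle x hxP) (hxm v₀ hv₀P)⟩
    · rintro ⟨hxP, hxM⟩
      exact ⟨hxP, fun y hy => (hPle y hy).trans_eq hxM.symm⟩
  rw [hFeq]
  apply Set.Subset.antisymm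
  · rintro x ⟨hxP, hxM⟩
    have hxH : x ∈ convexHull ℝ (↑(VS_finite G).toFinset : Set (Fin (n + 1) → ℝ)) := by
      rw [Set.Finite.coe_toFinset]
      rw [hansen_eq_hull] at hxP
      exact hxP
    rw [Finset.convexHull_eq] at hxH
    obtain ⟨w, hw0, hw1, hwx⟩ := hxH
    set t := (VS_finite G).toFinset with ht
    -- all vertices in the support attain M
    have hsupp : ∀ v ∈ t, w v ≠ 0 → l v = M := by
      by_contra hcon
      push_neg at hcon
      obtain ⟨v₁, hv₁t, hv₁w, hv₁l⟩ := hcon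
      have hv₁V : v₁ ∈ VS G := by rwa [← Set.Finite.mem_toFinset (VS_finite G)]
      have hlt : l v₁ < M := lt_of_le_of_ne (hmax v₁ hv₁V) hv₁l
      have hxval : l x = ∑ v ∈ t, w v * l v := by
        rw [← hwx, Finset.centerMass_eq_of_sum_1 _ _ hw1, map_sum]
        congr 1
        ext v
        simp
      have hstrict : ∑ v ∈ t, w v * l v < ∑ v ∈ t, w v * M := by
        apply Finset.sum_lt_sum
        · intro v hv
          apply mul_le_mul_of_nonneg_left _ (hw0 v hv)
          rw [Set.Finite.mem_toFinset] at hv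
          exact hmax v hv
        · refine ⟨v₁, hv₁t, ?_⟩
          have hwpos : 0 < w v₁ := lt_of_le_of_ne (hw0 v₁ hv₁t) (Ne.symm hv₁w)
          exact mul_lt_mul_of_pos_left hlt hwpos
      have : ∑ v ∈ t, w v * M = M := by
        rw [← Finset.sum_mul, hw1, one_mul]
      rw [hxM] at hxval
      linarith [hxval, hstrict, this]
    -- restrict to the support
    have hxcm : (t.filter (fun v => w v ≠ 0)).centerMass w id = x := by
      rw [Finset.centerMass_filter_ne_zero]
      exact hwx
    rw [← hxcm]
    apply Finset.centerMass_mem_convexHull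
    · intro v hv
      exact hw0 v (Finset.mem_filter.1 hv).1
    · rw [Finset.sum_filter_ne_zero, hw1]
      norm_num
    · intro v hv
      rw [Finset.mem_filter] at hv
      obtain ⟨hvt, hvw⟩ := hv
      have hvV : v ∈ VS G := by rwa [← Set.Finite.mem_toFinset (VS_finite G)]
      refine ⟨hvV, ?_, hsupp v hvt hvw⟩
      rw [hansen_eq_hull]
      exact subset_convexHull ℝ _ hvV
  · apply convexHull_min
    · rintro x ⟨-, hxF⟩
      exact hxF
    · exact (convex_convexHull ℝ _).inter (convex_hyperplane ⟨l.map_add, l.map_smul⟩ M)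

lemma faces_finite :
    {F : Set (Fin (n + 1) → ℝ) | IsExposed ℝ (hansenPolytope G) F ∧ F.Nonempty}.Finite := by
  apply Set.Finite.subset (((VS_finite G).finite_subsets).image (fun W => convexHull ℝ W))
  rintro F ⟨hexp, hne⟩
  exact ⟨VS G ∩ F, Set.inter_subset_left, (exposed_face_eq_hull G hexp hne).symm⟩

/-! ### Helpers for the combinatorial analysis -/

@[simp] lemma flipT_apply (τ : Pat n) (j : Fin (n + 1)) : flipT τ j = (τ j).flip := rfl

lemma Sp_subset (τ : Pat n) : Sp S τ ⊆ S := Finset.filter_subset _ _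
lemma Sm_subset (τ : Pat n) : Sm S τ ⊆ S := Finset.filter_subset _ _
lemma Cp_subset (τ : Pat n) : Cp C τ ⊆ C := Finset.filter_subset _ _
lemma Cm_subset (τ : Pat n) : Cm C τ ⊆ C := Finset.filter_subset _ _

lemma Sp_Sm_disj (τ : Pat n) {s : Fin n} (h1 : s ∈ Sp S τ) (h2 : s ∈ Sm S τ) : False := by
  rw [mem_Sp] at h1; rw [mem_Sm] at h2
  rw [h1.2] at h2
  exact Sgn.noConfusion h2.2

lemma Cp_Cm_disj (τ : Pat n) {c : Fin n} (h1 : c ∈ Cp C τ) (h2 : c ∈ Cm C τ) : False := by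
  rw [mem_Cp] at h1; rw [mem_Cm] at h2
  rw [h1.2] at h2
  exact Sgn.noConfusion h2.2

lemma not_mem_S_of_mem_C (hdisj : Disjoint C S) {v : Fin n} (hv : v ∈ C) : v ∉ S :=
  Finset.disjoint_left.1 hdisj hv

lemma mem_C_or_S (hcover : C ∪ S = Finset.univ) (v : Fin n) : v ∈ C ∨ v ∈ S := by
  have : v ∈ C ∪ S := by rw [hcover]; exact Finset.mem_univ v
  exact Finset.mem_union.1 this

lemma stable_of_subset_S (hS : IsStable G S) {I : Finset (Fin n)} (h : I ⊆ S) :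
    IsStable G I :=
  stable_subset G hS h

/-- Two elements of a stable set lying in the clique `C` coincide. -/
lemma stable_two_in_C (hC : G.IsClique (↑C : Set (Fin n))) {I : Finset (Fin n)}
    (hI : IsStable G I) {a b : Fin n}
    (ha : a ∈ I) (hb : b ∈ I) (haC : a ∈ C) (hbC : b ∈ C) : a = b := by
  by_contra hab
  exact hI ha hb (hC haC hbC hab)

lemma stable_insert_c (hS : IsStable G S) {c : Fin n} {T : Finset (Fin n)} (hT : T ⊆ S)
    (hadj : ∀ a ∈ T, ¬G.Adj c a) : IsStable G (insert c T) := by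
  intro a ha b hb hab
  rw [Finset.mem_insert] at ha hb
  rcases ha with rfl | ha
  · rcases hb with rfl | hb
    · exact (G.loopless.irrefl _) hab
    · exact hadj b hb hab
  · rcases hb with rfl | hb
    · exact hadj a ha (G.adj_symm hab)
    · exact hS (hT ha) (hT hb) hab

/-! ### Intro lemmas for family membership -/

lemma inK_Ks {τ : Pat n} {s : Fin n} (hs : s ∈ Sp S τ) :
    insert s (Np G s ∩ Cp C τ) ∈ KF G C S τ := by
  rw [KF, Finset.mem_union]
  exact Or.inl (Finset.mem_image.2 ⟨s, hs, rfl⟩)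

lemma inK_ite {τ : Pat n} (h : τ 0 = Sgn.neg ∨ (τ 0 = Sgn.zer ∧ ¬T0A G C S τ)) :
    (if (Cp C τ).Nonempty then Cp C τ else ∅) ∈ KF G C S τ := by
  rw [KF, Finset.mem_union]
  right
  rw [branch]
  rcases h with h | ⟨h, h2⟩
  · rw [if_neg (by rw [h]; exact fun hc => Sgn.noConfusion hc), if_pos h]
    exact Finset.mem_insert_self _ _
  · rw [if_neg (by rw [h]; exact fun hc => Sgn.noConfusion hc),
      if_neg (by rw [h]; exact fun hc => Sgn.noConfusion hc), if_neg h2]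
    exact Finset.mem_singleton_self _

lemma inK_excl {τ : Pat n} (h : τ 0 = Sgn.neg) {y : Fin n} (hy : y ∈ C) (hy2 : y ∉ Cm C τ) :
    insert y (Cp C τ) ∈ KF G C S τ := by
  rw [KF, Finset.mem_union]
  right
  rw [branch, if_neg (by rw [h]; exact fun hc => Sgn.noConfusion hc), if_pos h]
  exact Finset.mem_insert.2 (Or.inr (Finset.mem_image.2
    ⟨y, Finset.mem_sdiff.2 ⟨hy, hy2⟩, rfl⟩))

lemma inK_lever {τ : Pat n} (h : τ 0 = Sgn.zer) (ha : T0A G C S τ) {c s : Fin n}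
    (hc : c ∈ C) (hc1 : c ∉ Cp C τ) (hc2 : c ∉ Cm C τ)
    (hm : Np G c ∩ Sm S τ = ∅) (hs : s ∈ Np G c ∩ Sp S τ) :
    insert c (insert s (Np G c ∩ Np G s ∩ Cp C τ)) ∈ KF G C S τ := by
  rw [KF, Finset.mem_union]
  right
  rw [branch, if_neg (by rw [h]; exact fun hx => Sgn.noConfusion hx),
    if_neg (by rw [h]; exact fun hx => Sgn.noConfusion hx), if_pos ha]
  rw [Finset.mem_biUnion]
  refine ⟨c, ?_, Finset.mem_image.2 ⟨s, hs, rfl⟩⟩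
  rw [Finset.mem_filter, Finset.mem_sdiff, Finset.mem_union]
  exact ⟨⟨hc, fun h' => h'.elim hc1 hc2⟩, ⟨s, hs⟩, hm⟩

/-- Exhaustive description of members of `KF`. -/
lemma mem_KF_elim {τ : Pat n} {K : Finset (Fin n)} (hK : K ∈ KF G C S τ) :
    (∃ s ∈ Sp S τ, K = insert s (Np G s ∩ Cp C τ)) ∨
    ((τ 0 = Sgn.neg ∨ (τ 0 = Sgn.zer ∧ ¬T0A G C S τ)) ∧
      K = (if (Cp C τ).Nonempty then Cp C τ else ∅)) ∨
    (τ 0 = Sgn.neg ∧ ∃ y ∈ C, y ∉ Cm C τ ∧ K = insert y (Cp C τ)) ∨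
    (τ 0 = Sgn.zer ∧ T0A G C S τ ∧ ∃ c ∈ C, c ∉ Cp C τ ∧ c ∉ Cm C τ ∧
      (Np G c ∩ Sm S τ = ∅) ∧ ∃ s ∈ Np G c ∩ Sp S τ,
      K = insert c (insert s (Np G c ∩ Np G s ∩ Cp C τ))) := by
  rw [KF, Finset.mem_union] at hK
  rcases hK with hK | hK
  · rw [KsP, Finset.mem_image] at hK
    obtain ⟨s, hs, rfl⟩ := hK
    exact Or.inl ⟨s, hs, rfl⟩
  · rw [branch] at hK
    by_cases h0 : τ 0 = Sgn.pos
    · rw [if_pos h0] at hK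
      simp at hK
    rw [if_neg h0] at hK
    by_cases h1 : τ 0 = Sgn.neg
    · rw [if_pos h1] at hK
      rw [Finset.mem_insert] at hK
      rcases hK with rfl | hK
      · exact Or.inr (Or.inl ⟨Or.inl h1, rfl⟩)
      · rw [Finset.mem_image] at hK
        obtain ⟨y, hy, rfl⟩ := hK
        rw [Finset.mem_sdiff] at hy
        exact Or.inr (Or.inr (Or.inl ⟨h1, y, hy.1, hy.2, rfl⟩))
    · have h2 : τ 0 = Sgn.zer := by
        cases h : τ 0
        · exact absurd h h0
        · rfl
        · exact absurd h h1
      rw [if_neg h1] at hK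
      by_cases h3 : T0A G C S τ
      · rw [if_pos h3] at hK
        rw [Finset.mem_biUnion] at hK
        obtain ⟨c, hc, hK⟩ := hK
        rw [Finset.mem_filter, Finset.mem_sdiff, Finset.mem_union] at hc
        rw [Finset.mem_image] at hK
        obtain ⟨s, hs, rfl⟩ := hK
        exact Or.inr (Or.inr (Or.inr ⟨h2, h3, c, hc.1.1, fun h => hc.1.2 (Or.inl h),
          fun h => hc.1.2 (Or.inr h), hc.2.2, s, hs, rfl⟩))
      · rw [if_neg h3] at hK
        rw [Finset.mem_singleton] at hK
        exact Or.inr (Or.inl ⟨Or.inr ⟨h2, h3⟩, hK⟩)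

/-! ### The universal "miss" lemma -/

/-- Any set whose clique part lies in `Cp τ` and avoiding `Sm τ` misses every constraint
of `KF' τ`. -/
lemma miss_all {τ : Pat n} {W : Finset (Fin n)}
    (hWC : ∀ x ∈ W, x ∈ C → x ∈ Cp C τ) (hWS : W ∩ Sm S τ = ∅) :
    ∀ K ∈ KF' G C S τ, W ∩ K = ∅ := by
  intro K hK
  rw [Finset.eq_empty_iff_forall_notMem]
  intro x hx
  rw [Finset.mem_inter] at hx
  obtain ⟨hxW, hxK⟩ := hx
  have hWSm : ∀ y ∈ W, y ∉ Sm S τ := by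
    intro y hy hy2
    rw [Finset.eq_empty_iff_forall_notMem] at hWS
    exact hWS y (Finset.mem_inter.2 ⟨hy, hy2⟩)
  have hWCm : ∀ y ∈ W, y ∉ Cm C τ := by
    intro y hy hy2
    exact Cp_Cm_disj C τ (hWC y hy (Cm_subset C τ hy2)) hy2
  rcases mem_KF_elim G C S (hK : K ∈ KF G C S (flipT τ)) with
    ⟨s, hs, rfl⟩ | ⟨_, rfl⟩ | ⟨_, y, hy, hy2, rfl⟩ | ⟨_, _, c, hc, hc1, hc2, _, s, hs, rfl⟩
  · rw [Sp_flip] at hs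
    rw [Cp_flip] at hxK
    rw [Finset.mem_insert] at hxK
    rcases hxK with rfl | hxK
    · exact hWSm x hxW hs
    · exact hWCm x hxW (Finset.mem_inter.1 hxK).2
  · rw [Cp_flip] at hxK
    split at hxK
    · exact hWCm x hxW hxK
    · simp at hxK
  · rw [Cp_flip] at hxK
    rw [Cm_flip] at hy2
    rw [Finset.mem_insert] at hxK
    rcases hxK with rfl | hxK
    · exact hy2 (hWC x hxW hy)
    · exact hWCm x hxW hxK
  · rw [Sp_flip] at hs
    rw [Cp_flip] at hxK
    rw [Finset.mem_inter] at hs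
    rw [Finset.mem_insert, Finset.mem_insert] at hxK
    rcases hxK with rfl | rfl | hxK
    · rw [Cm_flip] at hc2
      exact hc2 (hWC x hxW hc)
    · exact hWSm x hxW hs.2
    · exact hWCm x hxW (Finset.mem_inter.1 hxK).2

/-! ### Hit lemmas -/

lemma hit_all (hC : G.IsClique (↑C : Set (Fin n))) {τ : Pat n} {W : Finset (Fin n)}
    {c : Fin n} (hc : c ∈ Cp C τ) (hcW : c ∈ W)
    (hSpW : ∀ s ∈ Sp S τ, s ∉ Np G s → True) -- dummy to be removed
    (hSpW' : ∀ s ∈ Sp S τ, s ∉ Np G c → s ∈ W) :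
    ∀ K ∈ KF G C S τ, (W ∩ K).Nonempty := by
  intro K hK
  have hcC : c ∈ C := Cp_subset C τ hc
  rcases mem_KF_elim G C S hK with
    ⟨s, hs, rfl⟩ | ⟨_, rfl⟩ | ⟨_, y, hy, hy2, rfl⟩ |
    ⟨_, _, c', hc', hc1, hc2, _, s, hs, rfl⟩
  · by_cases hsc : s ∈ Np G c
    · refine ⟨c, Finset.mem_inter.2 ⟨hcW, Finset.mem_insert.2 (Or.inr ?_)⟩⟩
      rw [Finset.mem_inter, mem_Np]
      rw [mem_Np] at hsc
      exact ⟨G.adj_symm hsc, hc⟩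
    · exact ⟨s, Finset.mem_inter.2 ⟨hSpW' s hs hsc, Finset.mem_insert_self _ _⟩⟩
  · rw [if_pos ⟨c, hc⟩]
    exact ⟨c, Finset.mem_inter.2 ⟨hcW, hc⟩⟩
  · exact ⟨c, Finset.mem_inter.2 ⟨hcW, Finset.mem_insert.2 (Or.inr hc)⟩⟩
  · rw [Finset.mem_inter] at hs
    by_cases hsc : s ∈ Np G c
    · refine ⟨c, Finset.mem_inter.2 ⟨hcW, ?_⟩⟩
      rw [Finset.mem_insert, Finset.mem_insert]
      right; right
      rw [Finset.mem_inter, Finset.mem_inter, mem_Np, mem_Np]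
      refine ⟨⟨?_, ?_⟩, hc⟩
      · -- c' adjacent to c: both in C, distinct
        have hne : c' ≠ c := fun h => hc1 (h ▸ hc)
        exact hC hc' hcC hne
      · rw [mem_Np] at hsc
        exact G.adj_symm hsc
    · refine ⟨s, Finset.mem_inter.2 ⟨hSpW' s hs.2 hsc, ?_⟩⟩
      rw [Finset.mem_insert, Finset.mem_insert]
      right; left; rfl

lemma hit_pure {τ : Pat n} (h : τ 0 = Sgn.pos ∨ (τ 0 = Sgn.zer ∧ T0A G C S τ))
    {W : Finset (Fin n)} (hW : Sp S τ ⊆ W) :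
    ∀ K ∈ KF G C S τ, (W ∩ K).Nonempty := by
  intro K hK
  rcases mem_KF_elim G C S hK with
    ⟨s, hs, rfl⟩ | ⟨hcond, rfl⟩ | ⟨hneg, _⟩ | ⟨hzer, ht0a, _, _, _, _, _, s, hs, rfl⟩
  · exact ⟨s, Finset.mem_inter.2 ⟨hW hs, Finset.mem_insert_self _ _⟩⟩
  · exfalso
    rcases h with h | ⟨h, h2⟩ <;> rcases hcond with h' | ⟨h', h2'⟩
    · rw [h] at h'; exact Sgn.noConfusion h'
    · rw [h] at h'; exact Sgn.noConfusion h'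
    · rw [h] at h'; exact Sgn.noConfusion h'
    · exact h2' h2
  · exfalso
    rcases h with h | ⟨h, _⟩ <;> rw [h] at hneg <;> exact Sgn.noConfusion hneg
  · rw [Finset.mem_inter] at hs
    exact ⟨s, Finset.mem_inter.2 ⟨hW hs.2,
      Finset.mem_insert.2 (Or.inr (Finset.mem_insert_self _ _))⟩⟩

/-! ### Witness lemmas -/

/-- Pure witnesses in the classes with a pure positive side. -/
lemma memA_pure (hdisj : Disjoint C S)
    {τ : Pat n} (h : τ 0 = Sgn.pos ∨ (τ 0 = Sgn.zer ∧ T0A G C S τ))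
    {I : Finset (Fin n)} (hI1 : I ⊆ S) (hI2 : Sp S τ ⊆ I) (hI3 : I ∩ Sm S τ = ∅) :
    memA G C S τ I := by
  refine ⟨hit_pure G C S h hI2, miss_all G C S ?_ hI3⟩
  intro x hx hxC
  exact absurd (hI1 hx) (not_mem_S_of_mem_C C S hdisj hxC)

/-- The clique-vertex witness `I_c`, possibly extended by a free stable vertex. -/
lemma memA_IcExt (hdisj : Disjoint C S) (hC : G.IsClique (↑C : Set (Fin n)))
    {τ : Pat n} {c : Fin n} (hc : c ∈ Cp C τ) {T : Finset (Fin n)}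
    (hT1 : Sp S τ \ Np G c ⊆ T) (hT2 : T ⊆ S) (hT3 : T ∩ Sm S τ = ∅) :
    memA G C S τ (insert c T) := by
  constructor
  · refine hit_all G C S hC hc (Finset.mem_insert_self _ _) (fun _ _ _ => trivial) ?_
    intro s hs hsc
    exact Finset.mem_insert.2 (Or.inr (hT1 (Finset.mem_sdiff.2 ⟨hs, by
      rwa [mem_Np] at hsc ⊢⟩)))
  · apply miss_all G C S
    · intro x hx hxC
      rcases Finset.mem_insert.1 hx with rfl | hx
      · exact hc
      · exact absurd (hT2 hx) (not_mem_S_of_mem_C C S hdisj hxC)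
    · rw [Finset.eq_empty_iff_forall_notMem]
      intro x hx
      rw [Finset.mem_inter, Finset.mem_insert] at hx
      rcases hx.1 with rfl | hxT
      · exact not_mem_S_of_mem_C C S hdisj (Cp_subset C τ hc) (Sm_subset S τ hx.2)
      · rw [Finset.eq_empty_iff_forall_notMem] at hT3
        exact hT3 x (Finset.mem_inter.2 ⟨hxT, hx.2⟩)

lemma memA_Ic (hdisj : Disjoint C S) (hC : G.IsClique (↑C : Set (Fin n)))
    {τ : Pat n} {c : Fin n} (hc : c ∈ Cp C τ) :
    memA G C S τ (insert c (Sp S τ \ Np G c)) := by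
  refine memA_IcExt G C S hdisj hC hc subset_rfl
    ((Finset.sdiff_subset).trans (Sp_subset S τ)) ?_
  rw [Finset.eq_empty_iff_forall_notMem]
  intro x hx
  rw [Finset.mem_inter, Finset.mem_sdiff] at hx
  exact Sp_Sm_disj S τ hx.1.1 hx.2

lemma stable_Ic (hS : IsStable G S) {c : Fin n} {T : Finset (Fin n)}
    (hT : T ⊆ S \ Np G c) : IsStable G (insert c T) := by
  apply stable_insert_c G S hS
  · intro a ha
    exact (Finset.mem_sdiff.1 (hT ha)).1
  · intro a ha
    have := (Finset.mem_sdiff.1 (hT ha)).2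
    rwa [mem_Np] at this

/-! ### Extraction lemmas -/

lemma inK'_Ks {τ : Pat n} {s : Fin n} (hs : s ∈ Sm S τ) :
    insert s (Np G s ∩ Cm C τ) ∈ KF' G C S τ := by
  have := inK_Ks G C S (τ := flipT τ) (s := s) (by rwa [Sp_flip])
  rwa [Cp_flip] at this

lemma extract_U3 {τ : Pat n} {I : Finset (Fin n)} (hmem : memA G C S τ I)
    (hIC : ∀ x ∈ I, x ∉ C) : Sp S τ ⊆ I ∧ I ∩ Sm S τ = ∅ := by
  constructor
  · intro s hs
    obtain ⟨x, hx⟩ := hmem.1 _ (inK_Ks G C S hs)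
    rw [Finset.mem_inter, Finset.mem_insert] at hx
    rcases hx.2 with rfl | hx2
    · exact hx.1
    · exact absurd (Cp_subset C τ (Finset.mem_inter.1 hx2).2) (hIC x hx.1)
  · rw [Finset.eq_empty_iff_forall_notMem]
    intro s hs
    rw [Finset.mem_inter] at hs
    have := hmem.2 _ (inK'_Ks G C S hs.2)
    rw [Finset.eq_empty_iff_forall_notMem] at this
    exact this s (Finset.mem_inter.2 ⟨hs.1, Finset.mem_insert_self _ _⟩)

lemma extract_U5a {τ : Pat n} (h : τ 0 = Sgn.neg ∨ (τ 0 = Sgn.zer ∧ ¬T0A G C S τ))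
    {I : Finset (Fin n)} (hmem : memA G C S τ I) : (I ∩ Cp C τ).Nonempty := by
  have := hmem.1 _ (inK_ite G C S h)
  by_cases hcp : (Cp C τ).Nonempty
  · rwa [if_pos hcp] at this
  · rw [if_neg hcp] at this
    simp at this

lemma extract_U6 (hC : G.IsClique (↑C : Set (Fin n))) {τ : Pat n} {I : Finset (Fin n)}
    (hI : IsStable G I) (hmem : memA G C S τ I) {c s : Fin n} (hcC : c ∈ C) (hcI : c ∈ I)
    (hs1 : s ∈ Np G c) (hs2 : s ∈ Sp S τ) : c ∈ Cp C τ := by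
  obtain ⟨x, hx⟩ := hmem.1 _ (inK_Ks G C S hs2)
  rw [Finset.mem_inter, Finset.mem_insert] at hx
  rcases hx.2 with rfl | hx2
  · exfalso
    rw [mem_Np] at hs1
    exact hI hcI hx.1 hs1
  · rw [Finset.mem_inter] at hx2
    have hxc : x = c := stable_two_in_C G C hC hI hx.1 hcI (Cp_subset C τ hx2.2) hcC
    rw [← hxc]
    exact hx2.2

lemma extract_U7 {τ : Pat n} {I : Finset (Fin n)} (hmem : memA G C S τ I) {c : Fin n}
    (hcI : c ∈ I) (hcm : c ∈ Cm C τ) : Np G c ∩ Sm S τ = ∅ := by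
  rw [Finset.eq_empty_iff_forall_notMem]
  intro s hs
  rw [Finset.mem_inter] at hs
  have := hmem.2 _ (inK'_Ks G C S hs.2)
  rw [Finset.eq_empty_iff_forall_notMem] at this
  apply this c
  rw [Finset.mem_inter, Finset.mem_insert]
  refine ⟨hcI, Or.inr ?_⟩
  rw [Finset.mem_inter, mem_Np]
  rw [mem_Np] at hs
  exact ⟨G.adj_symm hs.1, hcm⟩

lemma extract_lever {τ : Pat n} (h0 : τ 0 = Sgn.zer) (ha : T0A G C S τ)
    {I : Finset (Fin n)} (hmem : memA G C S τ I) {c : Fin n} (hcC : c ∈ C)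
    (h1 : c ∉ Cp C τ) (h2 : c ∉ Cm C τ) (hm : (Np G c ∩ Sm S τ).Nonempty)
    (hp : Np G c ∩ Sp S τ = ∅) : c ∉ I := by
  obtain ⟨sb, hsb⟩ := hm
  have hK : insert c (insert sb (Np G c ∩ Np G sb ∩ Cm C τ)) ∈ KF' G C S τ := by
    have := inK_lever G C S (τ := flipT τ) (by rw [flipT_apply, h0]; rfl)
      ((T0A_flip G C S).2 ha) hcC (by rwa [Cp_flip]) (by rwa [Cm_flip])
      (by rwa [Sm_flip]) (s := sb) (by rwa [Sp_flip])
    rwa [Cp_flip] at this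
  intro hcI
  have := hmem.2 _ hK
  rw [Finset.eq_empty_iff_forall_notMem] at this
  exact this c (Finset.mem_inter.2 ⟨hcI, Finset.mem_insert_self _ _⟩)

lemma extract_U8 {τ : Pat n} {I : Finset (Fin n)} (hmem : memA G C S τ I) {s : Fin n}
    (hs : s ∈ Sp S τ) : (I ∩ insert s (Np G s ∩ Cp C τ)).Nonempty :=
  hmem.1 _ (inK_Ks G C S hs)

lemma extract_U9 {τ : Pat n} {J : Finset (Fin n)} (hmem : memA G C S (flipT τ) J)
    {s : Fin n} (hs : s ∈ Sp S τ) : s ∉ J := by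
  have hK : insert s (Np G s ∩ Cp C τ) ∈ KF' G C S (flipT τ) := by
    rw [KF'_flip]
    exact inK_Ks G C S hs
  have := hmem.2 _ hK
  rw [Finset.eq_empty_iff_forall_notMem] at this
  intro hsJ
  exact this s (Finset.mem_inter.2 ⟨hsJ, Finset.mem_insert_self _ _⟩)

lemma extract_P5 {τ : Pat n} (h0 : τ 0 = Sgn.pos) {I : Finset (Fin n)}
    (hmem : memA G C S τ I) {c : Fin n} (hcC : c ∈ C) (hcI : c ∈ I) : c ∈ Cp C τ := by
  by_contra hc
  have hK : insert c (Cm C τ) ∈ KF' G C S τ := by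
    have := inK_excl G C S (τ := flipT τ) (by rw [flipT_apply, h0]; rfl) hcC
      (by rwa [Cm_flip])
    rwa [Cp_flip] at this
  have := hmem.2 _ hK
  rw [Finset.eq_empty_iff_forall_notMem] at this
  exact this c (Finset.mem_inter.2 ⟨hcI, Finset.mem_insert_self _ _⟩)

/-! ### Markers and attainment -/

/-- The face of `τ` has a "pure" positive vertex. -/
def PA (τ : Pat n) : Prop :=
  ∃ I : Finset (Fin n), IsStable G I ∧ memA G C S τ I ∧ ∀ x ∈ I, x ∉ C

lemma Sp_stable (hS : IsStable G S) (τ : Pat n) : IsStable G (Sp S τ) :=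
  stable_of_subset_S G S hS (Sp_subset S τ)

lemma PA_of_cond (hdisj : Disjoint C S) (hS : IsStable G S) {τ : Pat n}
    (h : τ 0 = Sgn.pos ∨ (τ 0 = Sgn.zer ∧ T0A G C S τ)) : PA G C S τ := by
  refine ⟨Sp S τ, Sp_stable G S hS τ, ?_, ?_⟩
  · apply memA_pure G C S hdisj h (Sp_subset S τ) subset_rfl
    rw [Finset.eq_empty_iff_forall_notMem]
    intro x hx
    rw [Finset.mem_inter] at hx
    exact Sp_Sm_disj S τ hx.1 hx.2
  · intro x hx hxC
    exact not_mem_S_of_mem_C C S hdisj hxC (Sp_subset S τ hx)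

lemma not_PA_of_cond {τ : Pat n}
    (h : τ 0 = Sgn.neg ∨ (τ 0 = Sgn.zer ∧ ¬T0A G C S τ)) : ¬PA G C S τ := by
  rintro ⟨I, hI, hmem, hpure⟩
  obtain ⟨x, hx⟩ := extract_U5a G C S h hmem
  rw [Finset.mem_inter] at hx
  exact hpure x hx.1 (Cp_subset C τ hx.2)

lemma PA_iff (hdisj : Disjoint C S) (hS : IsStable G S) (τ : Pat n) :
    PA G C S τ ↔ (τ 0 = Sgn.pos ∨ (τ 0 = Sgn.zer ∧ T0A G C S τ)) := by
  constructor
  · intro h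
    by_contra hcon
    push_neg at hcon
    have : τ 0 = Sgn.neg ∨ (τ 0 = Sgn.zer ∧ ¬T0A G C S τ) := by
      cases h0 : τ 0
      · exact absurd h0 hcon.1
      · right
        exact ⟨rfl, fun ht => (hcon.2 h0) ht⟩
      · exact Or.inl rfl
    exact not_PA_of_cond G C S this h
  · exact PA_of_cond G C S hdisj hS

lemma not_T0A_elim {τ : Pat n} (h : ¬T0A G C S τ) :
    ∃ c, (c ∈ Cp C τ ∨ c ∈ Cm C τ) ∧ Np G c ∩ Sp S τ = ∅ ∧ Np G c ∩ Sm S τ = ∅ := by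
  rw [T0A] at h
  push_neg at h
  obtain ⟨c, hc, h1, h2⟩ := h
  try rw [Finset.not_nonempty_iff_eq_empty] at h1 h2
  exact ⟨c, Finset.mem_union.1 hc, h1, h2⟩

lemma stable_Ic' (hS : IsStable G S) (τ : Pat n) (c : Fin n) :
    IsStable G (insert c (Sp S τ \ Np G c)) := by
  apply stable_Ic G S hS
  intro a ha
  rw [Finset.mem_sdiff] at ha ⊢
  exact ⟨Sp_subset S τ ha.1, ha.2⟩

lemma exists_attained (hdisj : Disjoint C S) (hC : G.IsClique (↑C : Set (Fin n)))
    (hS : IsStable G S) (τ : Pat n) :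
    ∃ I : Finset (Fin n), IsStable G I ∧ (memA G C S τ I ∨ memA G C S (flipT τ) I) := by
  by_cases h0 : τ 0 = Sgn.pos
  · obtain ⟨I, hI, hmem, -⟩ := PA_of_cond G C S hdisj hS (Or.inl h0)
    exact ⟨I, hI, Or.inl hmem⟩
  by_cases h1 : τ 0 = Sgn.neg
  · obtain ⟨I, hI, hmem, -⟩ := PA_of_cond G C S hdisj hS
      (τ := flipT τ) (Or.inl (by rw [flipT_apply, h1]; rfl))
    exact ⟨I, hI, Or.inr hmem⟩
  have h2 : τ 0 = Sgn.zer := by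
    cases h : τ 0
    · exact absurd h h0
    · rfl
    · exact absurd h h1
  by_cases h3 : T0A G C S τ
  · obtain ⟨I, hI, hmem, -⟩ := PA_of_cond G C S hdisj hS (Or.inr ⟨h2, h3⟩)
    exact ⟨I, hI, Or.inl hmem⟩
  · obtain ⟨c, hc | hc, -, -⟩ := not_T0A_elim G C S h3
    · exact ⟨_, stable_Ic' G S hS τ c, Or.inl (memA_Ic G C S hdisj hC hc)⟩
    · refine ⟨insert c (Sp S (flipT τ) \ Np G c), stable_Ic' G S hS (flipT τ) c,
        Or.inr (memA_Ic G C S hdisj hC ?_)⟩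
      rwa [Cp_flip]

/-! ### Step 1 of recovery: equality of classes -/

lemma class_eq (hdisj : Disjoint C S) (hS : IsStable G S) {τ σ : Pat n}
    (hA : ∀ I : Finset (Fin n), IsStable G I → (memA G C S τ I ↔ memA G C S σ I))
    (hB : ∀ I : Finset (Fin n), IsStable G I →
      (memA G C S (flipT τ) I ↔ memA G C S (flipT σ) I)) :
    τ 0 = σ 0 ∧ (τ 0 = Sgn.zer → (T0A G C S τ ↔ T0A G C S σ)) := by
  have hPA : PA G C S τ ↔ PA G C S σ := by
    constructor
    · rintro ⟨I, hI, hm, hp⟩; exact ⟨I, hI, (hA I hI).1 hm, hp⟩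
    · rintro ⟨I, hI, hm, hp⟩; exact ⟨I, hI, (hA I hI).2 hm, hp⟩
  have hPB : PA G C S (flipT τ) ↔ PA G C S (flipT σ) := by
    constructor
    · rintro ⟨I, hI, hm, hp⟩; exact ⟨I, hI, (hB I hI).1 hm, hp⟩
    · rintro ⟨I, hI, hm, hp⟩; exact ⟨I, hI, (hB I hI).2 hm, hp⟩
  rw [PA_iff G C S hdisj hS, PA_iff G C S hdisj hS] at hPA hPB
  simp only [flipT_apply, Sgn.flip_eq_pos, Sgn.flip_eq_zer, T0A_flip] at hPB
  set a := T0A G C S τ with ha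
  set b := T0A G C S σ with hb
  clear_value a b
  clear hA hB
  cases hτ : τ 0 <;> cases hσ : σ 0 <;> rw [hτ, hσ] at hPA hPB <;>
    simp at hPA hPB <;>
    first
      | exact absurd hPA hPB
      | exact absurd hPB hPA
      | exact ⟨rfl, fun _ => by tauto⟩
      | exact ⟨rfl, fun h => absurd h (by simp)⟩
      | (exfalso; tauto)
/-! ### Step 2 of recovery: the signed vertex sets -/

lemma pure_Sp (hdisj : Disjoint C S) (σ : Pat n) : ∀ x ∈ Sp S σ, x ∉ C :=
  fun x hx hxC => not_mem_S_of_mem_C C S hdisj hxC (Sp_subset S σ hx)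

lemma rec_Sp_sub (hdisj : Disjoint C S) (hS : IsStable G S) {τ σ : Pat n}
    (hcondσ : σ 0 = Sgn.pos ∨ (σ 0 = Sgn.zer ∧ T0A G C S σ))
    (hdir : ∀ I : Finset (Fin n), IsStable G I → memA G C S σ I → memA G C S τ I) :
    Sp S τ ⊆ Sp S σ := by
  have hmem : memA G C S σ (Sp S σ) := by
    apply memA_pure G C S hdisj hcondσ (Sp_subset S σ) subset_rfl
    rw [Finset.eq_empty_iff_forall_notMem]
    intro x hx
    rw [Finset.mem_inter] at hx
    exact Sp_Sm_disj S σ hx.1 hx.2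
  have hmemτ := hdir _ (Sp_stable G S hS σ) hmem
  exact (extract_U3 G C S hmemτ (pure_Sp C S hdisj σ)).1

lemma rec_Sm_sub (hdisj : Disjoint C S) (hS : IsStable G S) {τ σ : Pat n}
    (hcondσ : σ 0 = Sgn.pos ∨ (σ 0 = Sgn.zer ∧ T0A G C S σ))
    (hdir : ∀ I : Finset (Fin n), IsStable G I → memA G C S σ I → memA G C S τ I)
    (hSp : Sp S τ = Sp S σ) : Sm S τ ⊆ Sm S σ := by
  intro s hs
  have hsS : s ∈ S := Sm_subset S τ hs
  by_contra hsmσ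
  have hspσ : s ∉ Sp S σ := by
    rw [← hSp]
    intro h
    exact Sp_Sm_disj S τ h hs
  have hsub : insert s (Sp S σ) ⊆ S := Finset.insert_subset hsS (Sp_subset S σ)
  have hmem : memA G C S σ (insert s (Sp S σ)) := by
    apply memA_pure G C S hdisj hcondσ hsub (Finset.subset_insert _ _)
    rw [Finset.eq_empty_iff_forall_notMem]
    intro x hx
    rw [Finset.mem_inter, Finset.mem_insert] at hx
    rcases hx.1 with rfl | hx1
    · exact hsmσ hx.2
    · exact Sp_Sm_disj S σ hx1 hx.2
  have hmemτ := hdir _ (stable_of_subset_S G S hS hsub) hmem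
  have h3 := (extract_U3 G C S hmemτ
    (fun x hx hxC => not_mem_S_of_mem_C C S hdisj hxC (hsub hx))).2
  rw [Finset.eq_empty_iff_forall_notMem] at h3
  exact h3 s (Finset.mem_inter.2 ⟨Finset.mem_insert_self _ _, hs⟩)

lemma rec_Cp_sub_P5 (hdisj : Disjoint C S) (hC : G.IsClique (↑C : Set (Fin n)))
    (hS : IsStable G S) {τ σ : Pat n} (h0σ : σ 0 = Sgn.pos)
    (hdir : ∀ I : Finset (Fin n), IsStable G I → memA G C S τ I → memA G C S σ I) :
    Cp C τ ⊆ Cp C σ := by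
  intro c hc
  have hmemσ := hdir _ (stable_Ic' G S hS τ c) (memA_Ic G C S hdisj hC hc)
  exact extract_P5 G C S h0σ hmemσ (Cp_subset C τ hc) (Finset.mem_insert_self _ _)

lemma rec_Cp_sub_ite (hdisj : Disjoint C S) (hC : G.IsClique (↑C : Set (Fin n)))
    (hS : IsStable G S) {τ σ : Pat n}
    (hcond : σ 0 = Sgn.neg ∨ (σ 0 = Sgn.zer ∧ ¬T0A G C S σ))
    (hdir : ∀ I : Finset (Fin n), IsStable G I → memA G C S τ I → memA G C S σ I) :
    Cp C τ ⊆ Cp C σ := by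
  intro c hc
  have hst := stable_Ic' G S hS τ c
  have hmemσ := hdir _ hst (memA_Ic G C S hdisj hC hc)
  obtain ⟨x, hx⟩ := extract_U5a G C S hcond hmemσ
  rw [Finset.mem_inter] at hx
  have : x = c := stable_two_in_C G C hC hst hx.1 (Finset.mem_insert_self _ _)
    (Cp_subset C σ hx.2) (Cp_subset C τ hc)
  rw [← this]
  exact hx.2

lemma rec_Cp_sub_t0a (hdisj : Disjoint C S) (hC : G.IsClique (↑C : Set (Fin n)))
    (hS : IsStable G S) {τ σ : Pat n}
    (h0σ : σ 0 = Sgn.zer) (htτ : T0A G C S τ) (htσ : T0A G C S σ)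
    (hSp : Sp S τ = Sp S σ) (hSm : Sm S τ = Sm S σ)
    (hdir : ∀ I : Finset (Fin n), IsStable G I → memA G C S τ I → memA G C S σ I) :
    Cp C τ ⊆ Cp C σ := by
  intro c hc
  have hcC : c ∈ C := Cp_subset C τ hc
  have hst := stable_Ic' G S hS τ c
  have hcI : c ∈ insert c (Sp S τ \ Np G c) := Finset.mem_insert_self _ _
  have hmemσ := hdir _ hst (memA_Ic G C S hdisj hC hc)
  have hpm := htτ c (Finset.mem_union.2 (Or.inl hc))
  rcases hpm with hp | hm
  · -- c has a neighbour in `Sp`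
    obtain ⟨s, hs⟩ := hp
    rw [Finset.mem_inter] at hs
    exact extract_U6 G C S hC hst hmemσ hcC hcI hs.1 (hSp ▸ hs.2)
  · -- c has a neighbour in `Sm` but (wlog) none in `Sp`
    by_cases hp : (Np G c ∩ Sp S τ).Nonempty
    · obtain ⟨s, hs⟩ := hp
      rw [Finset.mem_inter] at hs
      exact extract_U6 G C S hC hst hmemσ hcC hcI hs.1 (hSp ▸ hs.2)
    · -- no `Sp`-neighbour: use `extract_U7` and the lever
      have hcmσ : c ∉ Cm C σ := by
        intro hcm
        have := extract_U7 G C S hmemσ hcI hcm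
        rw [← hSm] at this
        obtain ⟨x, hx⟩ := hm
        rw [Finset.eq_empty_iff_forall_notMem] at this
        exact this x hx
      by_contra hcpσ
      have hm' : (Np G c ∩ Sm S σ).Nonempty := by rwa [← hSm]
      have hp' : Np G c ∩ Sp S σ = ∅ := by
        rw [← hSp]
        exact Finset.not_nonempty_iff_eq_empty.1 hp
      exact (extract_lever G C S h0σ htσ hmemσ hcC hcpσ hcmσ hm' hp') hcI

lemma rec_Sp_sub_t0b (hdisj : Disjoint C S) (hcover : C ∪ S = Finset.univ)
    (hC : G.IsClique (↑C : Set (Fin n))) (hS : IsStable G S) {τ σ : Pat n}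
    (hntτ : ¬T0A G C S τ)
    (hCp : Cp C τ = Cp C σ) (hCm : Cm C τ = Cm C σ)
    (hdirA : ∀ I : Finset (Fin n), IsStable G I → memA G C S σ I → memA G C S τ I)
    (hdirB : ∀ I : Finset (Fin n), IsStable G I →
      memA G C S (flipT σ) I → memA G C S (flipT τ) I) :
    Sp S τ ⊆ Sp S σ := by
  intro s hs
  have hsS : s ∈ S := Sp_subset S τ hs
  obtain ⟨cc, hcc, hccp, hccm⟩ := not_T0A_elim G C S hntτ
  have hccC : cc ∈ C := by
    rcases hcc with h | h
    · exact Cp_subset C τ h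
    · exact Cm_subset C τ h
  have hscc : s ∉ Np G cc := by
    intro h
    rw [Finset.eq_empty_iff_forall_notMem] at hccp
    exact hccp s (Finset.mem_inter.2 ⟨h, hs⟩)
  have hccs : cc ∉ Np G s := by
    intro h
    rw [mem_Np] at h hscc
    exact hscc (G.adj_symm h)
  rcases hcc with hcc | hcc
  · -- trigger in `Cp`
    have hccσ : cc ∈ Cp C σ := hCp ▸ hcc
    have hst := stable_Ic' G S hS σ cc
    have hmemτ := hdirA _ hst (memA_Ic G C S hdisj hC hccσ)
    obtain ⟨x, hx⟩ := extract_U8 G C S hmemτ hs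
    simp only [Finset.mem_inter, Finset.mem_insert, Finset.mem_sdiff] at hx
    obtain ⟨hx1, hx2⟩ := hx
    rcases hx2 with hxe | hx2
    · -- x = s is in the witness, so `s ∈ Sp σ`
      rw [hxe] at hx1
      rcases hx1 with hxe2 | hx1
      · rw [hxe2] at hsS
        exact (not_mem_S_of_mem_C C S hdisj hccC hsS).elim
      · exact hx1.1
    · -- x is a clique vertex of the witness: x = cc, contradicting non-adjacency
      exfalso
      have hxC : x ∈ C := Cp_subset C τ hx2.2
      rcases hx1 with hxe | hx1
      · rw [hxe] at hx2
        exact hccs hx2.1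
      · exact not_mem_S_of_mem_C C S hdisj hxC (Sp_subset S σ hx1.1)
  · -- trigger in `Cm`
    by_contra hsσ
    have hccσ : cc ∈ Cp C (flipT σ) := by
      rw [Cp_flip]
      exact hCm ▸ hcc
    rcases mem_C_or_S C S hcover s with hsC | _
    · exact not_mem_S_of_mem_C C S hdisj hsC hsS
    by_cases hsm : s ∈ Sm S σ
    · -- s ∈ Sm σ: the witness J contains s, contradicting `extract_U9`
      have hst := stable_Ic' G S hS (flipT σ) cc
      have hmem := hdirB _ hst (memA_Ic G C S hdisj hC hccσ)
      have := extract_U9 G C S hmem hs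
      apply this
      apply Finset.mem_insert.2
      right
      rw [Finset.mem_sdiff, Sp_flip]
      exact ⟨hsm, hscc⟩
    · -- s ∈ S0 σ: extended witness
      have hsub : insert s (Sp S (flipT σ) \ Np G cc) ⊆ S \ Np G cc := by
        intro x hx
        rcases Finset.mem_insert.1 hx with rfl | hx
        · exact Finset.mem_sdiff.2 ⟨hsS, hscc⟩
        · rw [Finset.mem_sdiff] at hx ⊢
          exact ⟨Sp_subset S (flipT σ) hx.1, hx.2⟩
      have hst : IsStable G (insert cc (insert s (Sp S (flipT σ) \ Np G cc))) :=
        stable_Ic G S hS hsub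
      have hmem : memA G C S (flipT σ) (insert cc (insert s (Sp S (flipT σ) \ Np G cc))) := by
        apply memA_IcExt G C S hdisj hC hccσ
        · exact (Finset.subset_insert _ _)
        · intro x hx
          exact (Finset.mem_sdiff.1 (hsub hx)).1
        · rw [Finset.eq_empty_iff_forall_notMem]
          intro x hx
          rw [Finset.mem_inter, Sm_flip] at hx
          rcases Finset.mem_insert.1 hx.1 with rfl | hx1
          · exact hsσ hx.2
          · rw [Finset.mem_sdiff, Sp_flip] at hx1
            exact Sp_Sm_disj S σ hx.2 hx1.1
      have hmemτ := hdirB _ hst hmem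
      have := extract_U9 G C S hmemτ hs
      apply this
      exact Finset.mem_insert.2 (Or.inr (Finset.mem_insert_self _ _))
/-! ### The master recovery theorem -/

theorem tau_eq (hdisj : Disjoint C S) (hcover : C ∪ S = Finset.univ)
    (hC : G.IsClique (↑C : Set (Fin n))) (hS : IsStable G S) {τ σ : Pat n}
    (hA : ∀ I : Finset (Fin n), IsStable G I → (memA G C S τ I ↔ memA G C S σ I))
    (hB : ∀ I : Finset (Fin n), IsStable G I →
      (memA G C S (flipT τ) I ↔ memA G C S (flipT σ) I)) :
    τ = σ := by
  obtain ⟨h00, hT⟩ := class_eq G C S hdisj hS hA hB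
  have hAτσ : ∀ I : Finset (Fin n), IsStable G I → memA G C S τ I → memA G C S σ I :=
    fun I hI => (hA I hI).1
  have hAστ : ∀ I : Finset (Fin n), IsStable G I → memA G C S σ I → memA G C S τ I :=
    fun I hI => (hA I hI).2
  have hBτσ : ∀ I : Finset (Fin n), IsStable G I →
      memA G C S (flipT τ) I → memA G C S (flipT σ) I := fun I hI => (hB I hI).1
  have hBστ : ∀ I : Finset (Fin n), IsStable G I →
      memA G C S (flipT σ) I → memA G C S (flipT τ) I := fun I hI => (hB I hI).2
  have key : Sp S τ = Sp S σ ∧ Sm S τ = Sm S σ ∧ Cp C τ = Cp C σ ∧ Cm C τ = Cm C σ := by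
    cases h0τ : τ 0 with
    | pos =>
      have h0σ : σ 0 = Sgn.pos := by rw [← h00, h0τ]
      have hSp : Sp S τ = Sp S σ :=
        Finset.Subset.antisymm (rec_Sp_sub G C S hdisj hS (Or.inl h0σ) hAστ)
          (rec_Sp_sub G C S hdisj hS (Or.inl h0τ) hAτσ)
      have hSm : Sm S τ = Sm S σ :=
        Finset.Subset.antisymm (rec_Sm_sub G C S hdisj hS (Or.inl h0σ) hAστ hSp)
          (rec_Sm_sub G C S hdisj hS (Or.inl h0τ) hAτσ hSp.symm)
      have hCp : Cp C τ = Cp C σ :=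
        Finset.Subset.antisymm (rec_Cp_sub_P5 G C S hdisj hC hS h0σ hAτσ)
          (rec_Cp_sub_P5 G C S hdisj hC hS h0τ hAστ)
      have hCm : Cm C τ = Cm C σ := by
        have h1 : Cp C (flipT τ) ⊆ Cp C (flipT σ) :=
          rec_Cp_sub_ite G C S hdisj hC hS
            (Or.inl (by rw [flipT_apply, h0σ]; rfl)) hBτσ
        have h2 : Cp C (flipT σ) ⊆ Cp C (flipT τ) :=
          rec_Cp_sub_ite G C S hdisj hC hS
            (Or.inl (by rw [flipT_apply, h0τ]; rfl)) hBστ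
        simp only [Sp_flip, Sm_flip, Cp_flip, Cm_flip] at h1 h2
        exact Finset.Subset.antisymm h1 h2
      exact ⟨hSp, hSm, hCp, hCm⟩
    | neg =>
      have h0σ : σ 0 = Sgn.neg := by rw [← h00, h0τ]
      have hfτ : flipT τ 0 = Sgn.pos := by rw [flipT_apply, h0τ]; rfl
      have hfσ : flipT σ 0 = Sgn.pos := by rw [flipT_apply, h0σ]; rfl
      have hSm : Sm S τ = Sm S σ := by
        have h1 := rec_Sp_sub G C S hdisj hS (τ := flipT τ) (σ := flipT σ) (Or.inl hfσ) hBστ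
        have h2 := rec_Sp_sub G C S hdisj hS (τ := flipT σ) (σ := flipT τ) (Or.inl hfτ) hBτσ
        simp only [Sp_flip, Sm_flip, Cp_flip, Cm_flip] at h1 h2
        exact Finset.Subset.antisymm h1 h2
      have hSp : Sp S τ = Sp S σ := by
        have hSm' : Sp S (flipT τ) = Sp S (flipT σ) := by rw [Sp_flip, Sp_flip, hSm]
        have h1 := rec_Sm_sub G C S hdisj hS (τ := flipT τ) (σ := flipT σ)
          (Or.inl hfσ) hBστ hSm'
        have h2 := rec_Sm_sub G C S hdisj hS (τ := flipT σ) (σ := flipT τ)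
          (Or.inl hfτ) hBτσ hSm'.symm
        simp only [Sp_flip, Sm_flip, Cp_flip, Cm_flip] at h1 h2
        exact Finset.Subset.antisymm h1 h2
      have hCp : Cp C τ = Cp C σ :=
        Finset.Subset.antisymm (rec_Cp_sub_ite G C S hdisj hC hS (Or.inl h0σ) hAτσ)
          (rec_Cp_sub_ite G C S hdisj hC hS (Or.inl h0τ) hAστ)
      have hCm : Cm C τ = Cm C σ := by
        have h1 := rec_Cp_sub_P5 G C S hdisj hC hS (τ := flipT τ) (σ := flipT σ) hfσ hBτσ
        have h2 := rec_Cp_sub_P5 G C S hdisj hC hS (τ := flipT σ) (σ := flipT τ) hfτ hBστ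
        simp only [Sp_flip, Sm_flip, Cp_flip, Cm_flip] at h1 h2
        exact Finset.Subset.antisymm h1 h2
      exact ⟨hSp, hSm, hCp, hCm⟩
    | zer =>
      have h0σ : σ 0 = Sgn.zer := by rw [← h00, h0τ]
      have hfτ : flipT τ 0 = Sgn.zer := by rw [flipT_apply, h0τ]; rfl
      have hfσ : flipT σ 0 = Sgn.zer := by rw [flipT_apply, h0σ]; rfl
      by_cases ht : T0A G C S τ
      case pos =>
        have htσ : T0A G C S σ := (hT h0τ).1 ht
        have hSp : Sp S τ = Sp S σ :=
          Finset.Subset.antisymm (rec_Sp_sub G C S hdisj hS (Or.inr ⟨h0σ, htσ⟩) hAστ)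
            (rec_Sp_sub G C S hdisj hS (Or.inr ⟨h0τ, ht⟩) hAτσ)
        have hSm : Sm S τ = Sm S σ :=
          Finset.Subset.antisymm (rec_Sm_sub G C S hdisj hS (Or.inr ⟨h0σ, htσ⟩) hAστ hSp)
            (rec_Sm_sub G C S hdisj hS (Or.inr ⟨h0τ, ht⟩) hAτσ hSp.symm)
        have hCp : Cp C τ = Cp C σ :=
          Finset.Subset.antisymm
            (rec_Cp_sub_t0a G C S hdisj hC hS h0σ ht htσ hSp hSm hAτσ)
            (rec_Cp_sub_t0a G C S hdisj hC hS h0τ htσ ht hSp.symm hSm.symm hAστ)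
        have hCm : Cm C τ = Cm C σ := by
          have htf : T0A G C S (flipT τ) := (T0A_flip G C S).2 ht
          have htfσ : T0A G C S (flipT σ) := (T0A_flip G C S).2 htσ
          have hSpf : Sp S (flipT τ) = Sp S (flipT σ) := by rw [Sp_flip, Sp_flip, hSm]
          have hSmf : Sm S (flipT τ) = Sm S (flipT σ) := by rw [Sm_flip, Sm_flip, hSp]
          have h1 := rec_Cp_sub_t0a G C S hdisj hC hS (τ := flipT τ) (σ := flipT σ)
            hfσ htf htfσ hSpf hSmf hBτσ
          have h2 := rec_Cp_sub_t0a G C S hdisj hC hS (τ := flipT σ) (σ := flipT τ)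
            hfτ htfσ htf hSpf.symm hSmf.symm hBστ
          simp only [Sp_flip, Sm_flip, Cp_flip, Cm_flip] at h1 h2
          exact Finset.Subset.antisymm h1 h2
        exact ⟨hSp, hSm, hCp, hCm⟩
      case neg =>
        have htσ : ¬T0A G C S σ := fun h => ht ((hT h0τ).2 h)
        have hCp : Cp C τ = Cp C σ :=
          Finset.Subset.antisymm
            (rec_Cp_sub_ite G C S hdisj hC hS (Or.inr ⟨h0σ, htσ⟩) hAτσ)
            (rec_Cp_sub_ite G C S hdisj hC hS (Or.inr ⟨h0τ, ht⟩) hAστ)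
        have hCm : Cm C τ = Cm C σ := by
          have h1 := rec_Cp_sub_ite G C S hdisj hC hS (τ := flipT τ) (σ := flipT σ)
            (Or.inr ⟨hfσ, fun h => htσ ((T0A_flip G C S).1 h)⟩) hBτσ
          have h2 := rec_Cp_sub_ite G C S hdisj hC hS (τ := flipT σ) (σ := flipT τ)
            (Or.inr ⟨hfτ, fun h => ht ((T0A_flip G C S).1 h)⟩) hBστ
          simp only [Sp_flip, Sm_flip, Cp_flip, Cm_flip] at h1 h2
          exact Finset.Subset.antisymm h1 h2
        have hSp : Sp S τ = Sp S σ :=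
          Finset.Subset.antisymm
            (rec_Sp_sub_t0b G C S hdisj hcover hC hS ht hCp hCm hAστ hBστ)
            (rec_Sp_sub_t0b G C S hdisj hcover hC hS htσ hCp.symm hCm.symm hAτσ hBτσ)
        have hSm : Sm S τ = Sm S σ := by
          have hCpf : Cp C (flipT τ) = Cp C (flipT σ) := by rw [Cp_flip, Cp_flip, hCm]
          have hCmf : Cm C (flipT τ) = Cm C (flipT σ) := by rw [Cm_flip, Cm_flip, hCp]
          have h1 := rec_Sp_sub_t0b G C S hdisj hcover hC hS (τ := flipT τ) (σ := flipT σ)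
            (fun h => ht ((T0A_flip G C S).1 h)) hCpf hCmf hBστ
            (by
              intro I hI hm
              rw [flipT_flipT] at hm ⊢
              exact hAστ I hI hm)
          have h2 := rec_Sp_sub_t0b G C S hdisj hcover hC hS (τ := flipT σ) (σ := flipT τ)
            (fun h => htσ ((T0A_flip G C S).1 h)) hCpf.symm hCmf.symm hBτσ
            (by
              intro I hI hm
              rw [flipT_flipT] at hm ⊢
              exact hAτσ I hI hm)
          simp only [Sp_flip, Sm_flip, Cp_flip, Cm_flip] at h1 h2
          exact Finset.Subset.antisymm h1 h2
        exact ⟨hSp, hSm, hCp, hCm⟩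
  obtain ⟨hSp, hSm, hCp, hCm⟩ := key
  funext j
  refine Fin.cases ?_ ?_ j
  · exact h00
  · intro v
    have hCpv := Finset.ext_iff.1 hCp v
    have hCmv := Finset.ext_iff.1 hCm v
    have hSpv := Finset.ext_iff.1 hSp v
    have hSmv := Finset.ext_iff.1 hSm v
    rw [mem_Cp, mem_Cp] at hCpv
    rw [mem_Cm, mem_Cm] at hCmv
    rw [mem_Sp, mem_Sp] at hSpv
    rw [mem_Sm, mem_Sm] at hSmv
    rcases mem_C_or_S C S hcover v with hv | hv
    · cases hτv : τ v.succ <;> cases hσv : σ v.succ <;>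
        rw [hτv, hσv] at hCpv hCmv <;>
        first
          | rfl
          | (exfalso; simp [hv] at hCpv hCmv)
    · cases hτv : τ v.succ <;> cases hσv : σ v.succ <;>
        rw [hτv, hσv] at hSpv hSmv <;>
        first
          | rfl
          | (exfalso; simp [hv] at hSpv hSmv)
end HansenProof

open HansenProof in
/-- Kalai's `3^d`-conjecture holds for Hansen polytopes of split graphs: if `G` is a
split graph on `d − 1` vertices (`d = n + 1`), then `H(G) ⊆ ℝ^d` has at least `3^d`
nonempty faces. -/
theorem hansen_split_3d_conjecture {n : ℕ} (G : SimpleGraph (Fin n))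
    (C S : Finset (Fin n)) (hdisj : Disjoint C S) (hcover : C ∪ S = Finset.univ)
    (hC : G.IsClique (↑C : Set (Fin n))) (hS : IsStable G S) :
    3 ^ (n + 1) ≤ numFaces (hansenPolytope G) := by
  classical
  have hatt : ∀ τ : Pat n, ∃ I : Finset (Fin n), IsStable G I ∧
      (memA G C S τ I ∨ memA G C S (flipT τ) I) :=
    exists_attained G C S hdisj hC hS
  have hinj : Function.Injective (fun τ : Pat n => Φ G C S τ) := by
    intro τ σ h
    simp only at h
    apply tau_eq G C S hdisj hcover hC hS
    · intro I hI
      constructor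
      · intro hm
        have h1 := (vPos_mem_Φ_iff G C S hC τ (hatt τ) hI).2 hm
        rw [h] at h1
        exact (vPos_mem_Φ_iff G C S hC σ (hatt σ) hI).1 h1
      · intro hm
        have h1 := (vPos_mem_Φ_iff G C S hC σ (hatt σ) hI).2 hm
        rw [← h] at h1
        exact (vPos_mem_Φ_iff G C S hC τ (hatt τ) hI).1 h1
    · intro I hI
      constructor
      · intro hm
        have h1 := (vNeg_mem_Φ_iff G C S hC τ (hatt τ) hI).2 hm
        rw [h] at h1
        exact (vNeg_mem_Φ_iff G C S hC σ (hatt σ) hI).1 h1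
      · intro hm
        have h1 := (vNeg_mem_Φ_iff G C S hC σ (hatt σ) hI).2 hm
        rw [← h] at h1
        exact (vNeg_mem_Φ_iff G C S hC τ (hatt τ) hI).1 h1
  have hmem : ∀ τ : Pat n, Φ G C S τ ∈
      {F : Set (Fin (n + 1) → ℝ) | IsExposed ℝ (hansenPolytope G) F ∧ F.Nonempty} :=
    fun τ => ⟨Φ_isExposed G C S τ, Φ_nonempty G C S hC τ (hatt τ)⟩
  have hfin : {F : Set (Fin (n + 1) → ℝ) |
      IsExposed ℝ (hansenPolytope G) F ∧ F.Nonempty}.Finite := faces_finite G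
  have : Finite ↥{F : Set (Fin (n + 1) → ℝ) |
      IsExposed ℝ (hansenPolytope G) F ∧ F.Nonempty} := hfin.to_subtype
  let f : Pat n → ↥{F : Set (Fin (n + 1) → ℝ) |
      IsExposed ℝ (hansenPolytope G) F ∧ F.Nonempty} := fun τ => ⟨Φ G C S τ, hmem τ⟩
  have hfinj : Function.Injective f := by
    intro a b hab
    exact hinj (congrArg Subtype.val hab)
  have hle := Nat.card_le_card_of_injective f hfinj
  have h1 : Nat.card (Pat n) = 3 ^ (n + 1) := by
    rw [Nat.card_eq_fintype_card, Fintype.card_fun, Sgn.card_eq, Fintype.card_fin]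
  rw [numFaces, ← Nat.card_coe_set_eq]
  rw [h1] at hle
  exact hle
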